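/- Let k₁, k₂ be constants with k₂² > 2k₁ > 0, set λ₁ = √(k₂ + √(k₂² − 2k₁)), λ₂ = √(k₂ − √(k₂² − 2k₁)), and define s₀(t) = (λ₁² + λ₂²)·sinh(λ₁t)·sinh(λ₂t) + 2λ₁λ₂(1 − cosh(λ₁t)·cosh(λ₂t)), s₁(t) = λ₁λ₂(λ₁² − λ₂²)(λ₁·sinh(λ₁t)·cosh(λ₂t) − λ₂·cosh(λ₁t)·sinh(λ₂t)), s₂(t) = λ₁λ₂((λ₁² + λ₂²)(cosh(λ₁t)·cosh(λ₂t) − 1) − 2λ₁λ₂·sinh(λ₁t)·sinh(λ₂t)). Let K = [[k₁ I, 0],[0, k₂ I]]. Then S(t) = ½·[[−(s₁(t)/s₀(t)) I, (s₂(t)/s₀(t)) I],[(s₂(t)/s₀(t)) I, −(s₀'(t)/s₀(t)) I]] solves the matrix Riccati equation S'(t) = S(t)C + Cᵀ S(t) + S(t) D S(t) − K on every interval of (0,∞) where s₀ does not vanish, and S(t)⁻¹ → 0 as t → 0⁺. -/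

import Mathlib

noncomputable section
open Real Set Matrix Filter

/-- The `2n × 2n` matrix `C = [[0, −I], [0, 0]]` in `n × n` block form. -/
def Cmat (n : ℕ) : Matrix (Fin n ⊕ Fin n) (Fin n ⊕ Fin n) ℝ :=
  Matrix.fromBlocks 0 (-1) 0 0

/-- The `2n × 2n` matrix `D = [[0, 0], [0, 2I]]` in `n × n` block form. -/
def Dmat (n : ℕ) : Matrix (Fin n ⊕ Fin n) (Fin n ⊕ Fin n) ℝ :=
  Matrix.fromBlocks 0 0 0 ((2 : ℝ) • 1)

/-- The block-diagonal matrix `[[a·I, 0], [0, b·I]]`. -/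
def blockDiag (n : ℕ) (a b : ℝ) : Matrix (Fin n ⊕ Fin n) (Fin n ⊕ Fin n) ℝ :=
  Matrix.fromBlocks (a • 1) 0 0 (b • 1)

/-- The matrix `½·[[-(s₁/s₀)I, (s₂/s₀)I], [(s₂/s₀)I, -(s₀'/s₀)I]]`. -/
def harnackMatrix (n : ℕ) (s₀ s₁ s₂ : ℝ → ℝ) (t : ℝ) :
    Matrix (Fin n ⊕ Fin n) (Fin n ⊕ Fin n) ℝ :=
  (1/2 : ℝ) • Matrix.fromBlocks (-(s₁ t / s₀ t) • 1) ((s₂ t / s₀ t) • 1)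
    ((s₂ t / s₀ t) • 1) (-(deriv s₀ t / s₀ t) • 1)

/-- `λ₁ = √(k₂ + √(k₂² − 2k₁))`. -/
def lam1 (k₁ k₂ : ℝ) : ℝ := Real.sqrt (k₂ + Real.sqrt (k₂ ^ 2 - 2 * k₁))

/-- `λ₂ = √(k₂ − √(k₂² − 2k₁))`. -/
def lam2 (k₁ k₂ : ℝ) : ℝ := Real.sqrt (k₂ - Real.sqrt (k₂ ^ 2 - 2 * k₁))

/-- `s₀` in the case `k₂² > 2k₁ > 0`. -/
def s0A (k₁ k₂ t : ℝ) : ℝ :=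
  ((lam1 k₁ k₂) ^ 2 + (lam2 k₁ k₂) ^ 2) * Real.sinh (lam1 k₁ k₂ * t) * Real.sinh (lam2 k₁ k₂ * t)
    + 2 * lam1 k₁ k₂ * lam2 k₁ k₂ * (1 - Real.cosh (lam1 k₁ k₂ * t) * Real.cosh (lam2 k₁ k₂ * t))

/-- `s₁` in the case `k₂² > 2k₁ > 0`. -/
def s1A (k₁ k₂ t : ℝ) : ℝ :=
  lam1 k₁ k₂ * lam2 k₁ k₂ * ((lam1 k₁ k₂) ^ 2 - (lam2 k₁ k₂) ^ 2) *
    (lam1 k₁ k₂ * Real.sinh (lam1 k₁ k₂ * t) * Real.cosh (lam2 k₁ k₂ * t)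
      - lam2 k₁ k₂ * Real.cosh (lam1 k₁ k₂ * t) * Real.sinh (lam2 k₁ k₂ * t))

/-- `s₂` in the case `k₂² > 2k₁ > 0`. -/
def s2A (k₁ k₂ t : ℝ) : ℝ :=
  lam1 k₁ k₂ * lam2 k₁ k₂ *
    (((lam1 k₁ k₂) ^ 2 + (lam2 k₁ k₂) ^ 2) *
        (Real.cosh (lam1 k₁ k₂ * t) * Real.cosh (lam2 k₁ k₂ * t) - 1)
      - 2 * lam1 k₁ k₂ * lam2 k₁ k₂ * Real.sinh (lam1 k₁ k₂ * t) * Real.sinh (lam2 k₁ k₂ * t))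

namespace RiccatiAux

open Topology

def f0 (a b t : ℝ) : ℝ :=
  (a ^ 2 + b ^ 2) * Real.sinh (a * t) * Real.sinh (b * t)
    + 2 * a * b * (1 - Real.cosh (a * t) * Real.cosh (b * t))

def f0' (a b t : ℝ) : ℝ :=
  (a ^ 2 + b ^ 2) * (a * (Real.cosh (a * t) * Real.sinh (b * t))
      + b * (Real.sinh (a * t) * Real.cosh (b * t)))
    - 2 * a * b * (a * (Real.sinh (a * t) * Real.cosh (b * t))
      + b * (Real.cosh (a * t) * Real.sinh (b * t)))

def f0'' (a b t : ℝ) : ℝ :=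
  (a ^ 2 - b ^ 2) ^ 2 * Real.sinh (a * t) * Real.sinh (b * t)

def f1 (a b t : ℝ) : ℝ :=
  a * b * (a ^ 2 - b ^ 2) *
    (a * Real.sinh (a * t) * Real.cosh (b * t) - b * Real.cosh (a * t) * Real.sinh (b * t))

def f1' (a b t : ℝ) : ℝ :=
  a * b * (a ^ 2 - b ^ 2) ^ 2 * Real.cosh (a * t) * Real.cosh (b * t)

def f2 (a b t : ℝ) : ℝ :=
  a * b * ((a ^ 2 + b ^ 2) * (Real.cosh (a * t) * Real.cosh (b * t) - 1)
    - 2 * a * b * Real.sinh (a * t) * Real.sinh (b * t))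

lemma hasDerivAt_sinh_mul (a t : ℝ) :
    HasDerivAt (fun τ => Real.sinh (a * τ)) (a * Real.cosh (a * t)) t := by
  have := (Real.hasDerivAt_sinh (a * t)).comp t ((hasDerivAt_id t).const_mul a)
  simpa [mul_comm, Function.comp_def] using this

lemma hasDerivAt_cosh_mul (a t : ℝ) :
    HasDerivAt (fun τ => Real.cosh (a * τ)) (a * Real.sinh (a * t)) t := by
  have := (Real.hasDerivAt_cosh (a * t)).comp t ((hasDerivAt_id t).const_mul a)
  simpa [mul_comm, Function.comp_def] using this

lemma hf0 (a b t : ℝ) : HasDerivAt (f0 a b) (f0' a b t) t := by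
  have h := (((hasDerivAt_sinh_mul a t).const_mul (a ^ 2 + b ^ 2)).mul
      (hasDerivAt_sinh_mul b t)).add
    ((((hasDerivAt_cosh_mul a t).mul (hasDerivAt_cosh_mul b t)).const_sub 1).const_mul
      (2 * a * b))
  refine h.congr_deriv ?_
  unfold f0'; ring

lemma hf0' (a b t : ℝ) : HasDerivAt (f0' a b) (f0'' a b t) t := by
  have h := ((((hasDerivAt_cosh_mul a t).mul (hasDerivAt_sinh_mul b t)).const_mul a).add
      (((hasDerivAt_sinh_mul a t).mul (hasDerivAt_cosh_mul b t)).const_mul b)).const_mul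
        (a ^ 2 + b ^ 2) |>.sub
    (((((hasDerivAt_sinh_mul a t).mul (hasDerivAt_cosh_mul b t)).const_mul a).add
      (((hasDerivAt_cosh_mul a t).mul (hasDerivAt_sinh_mul b t)).const_mul b)).const_mul
        (2 * a * b))
  refine h.congr_deriv ?_
  unfold f0''; ring

lemma hf1 (a b t : ℝ) : HasDerivAt (f1 a b) (f1' a b t) t := by
  have h := ((((hasDerivAt_sinh_mul a t).const_mul a).mul (hasDerivAt_cosh_mul b t)).sub
      (((hasDerivAt_cosh_mul a t).const_mul b).mul (hasDerivAt_sinh_mul b t))).const_mul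
    (a * b * (a ^ 2 - b ^ 2))
  refine h.congr_deriv ?_
  unfold f1'; ring

lemma hf2 (a b t : ℝ) : HasDerivAt (f2 a b) (f1 a b t) t := by
  have h := (((((hasDerivAt_cosh_mul a t).mul (hasDerivAt_cosh_mul b t)).sub_const 1).const_mul
      (a ^ 2 + b ^ 2)).sub
    (((hasDerivAt_sinh_mul a t).const_mul (2 * a * b)).mul (hasDerivAt_sinh_mul b t))).const_mul
    (a * b)
  refine h.congr_deriv ?_
  unfold f1; ring

lemma I3 (a b t : ℝ) : f0'' a b t = 2 * f2 a b t + (a ^ 2 + b ^ 2) * f0 a b t := by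
  unfold f0'' f2 f0; ring

lemma I1 (a b t : ℝ) :
    f1' a b t * f0 a b t - f1 a b t * f0' a b t
      = a ^ 2 * b ^ 2 * (f0 a b t) ^ 2 - (f2 a b t) ^ 2 := by
  have h1 : Real.cosh (a * t) ^ 2 = Real.sinh (a * t) ^ 2 + 1 := by
    rw [Real.cosh_sq']; ring
  have h2 : Real.cosh (b * t) ^ 2 = Real.sinh (b * t) ^ 2 + 1 := by
    rw [Real.cosh_sq']; ring
  set sa := Real.sinh (a * t)
  set ca := Real.cosh (a * t)
  set sb := Real.sinh (b * t)
  set cb := Real.cosh (b * t)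
  unfold f1' f0 f1 f0' f2
  linear_combination
    (-(a ^ 2 * b ^ 6 * cb ^ 2) + a ^ 2 * b ^ 6 * sb ^ 2 + 2 * a ^ 4 * b ^ 4 * cb ^ 2
      - 2 * a ^ 4 * b ^ 4 * sb ^ 2 - a ^ 6 * b ^ 2 * cb ^ 2 + a ^ 6 * b ^ 2 * sb ^ 2) * h1
    + (-(a ^ 2 * b ^ 6) + 2 * a ^ 4 * b ^ 4 - a ^ 6 * b ^ 2) * h2

/-- scalar-block matrix -/
def sb (n : ℕ) (p q r : ℝ) : Matrix (Fin n ⊕ Fin n) (Fin n ⊕ Fin n) ℝ :=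
  (1/2 : ℝ) • Matrix.fromBlocks ((-p) • 1) (q • 1) (q • 1) ((-r) • 1)

lemma riccati_matrix (n : ℕ) (p q r k₁ k₂ : ℝ) :
    sb n p q r * Cmat n + (Cmat n)ᵀ * sb n p q r + sb n p q r * Dmat n * sb n p q r
      - _root_.blockDiag n k₁ k₂
    = sb n (2 * k₁ - q ^ 2) (p - q * r) (2 * q - r ^ 2 + 2 * k₂) := by
  unfold sb Cmat Dmat _root_.blockDiag
  ext (i | i) (j | j) <;>
    simp [Matrix.mul_apply, Fintype.sum_sum_type, Matrix.one_apply, Finset.mul_sum,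
      Finset.sum_ite_eq, ite_and, mul_ite] <;>
    split_ifs <;> first | ring1 | (subst_vars; simp_all)

/-- right inverse of sb -/
lemma sb_mul_T (n : ℕ) (p q r u v w : ℝ)
    (h1 : (-p) * u + q * v = 2) (h2 : (-p) * v + q * w = 0)
    (h3 : q * u + (-r) * v = 0) (h4 : q * v + (-r) * w = 2) :
    sb n p q r * Matrix.fromBlocks (u • 1) (v • 1) (v • 1) (w • 1) = 1 := by
  unfold sb
  ext (i | i) (j | j) <;>
    simp [Matrix.mul_apply, Fintype.sum_sum_type, Matrix.one_apply, Finset.mul_sum,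
      Finset.sum_ite_eq, ite_and, mul_ite] <;>
    split_ifs <;>
    first
      | (field_simp; linarith [h1, h2, h3, h4])
      | ring1
      | (subst_vars; simp_all)

lemma entry_deriv (n : ℕ) (g₁ g₂ g₃ : ℝ → ℝ) (P Q R t : ℝ)
    (h₁ : HasDerivAt g₁ P t) (h₂ : HasDerivAt g₂ Q t) (h₃ : HasDerivAt g₃ R t)
    (i j : Fin n ⊕ Fin n) :
    HasDerivAt (fun τ => sb n (g₁ τ) (g₂ τ) (g₃ τ) i j) (sb n P Q R i j) t := by
  rcases i with i | i <;> rcases j with j | j <;>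
    by_cases h : i = j <;>
    simp only [sb, Matrix.smul_apply, Matrix.fromBlocks_apply₁₁, Matrix.fromBlocks_apply₁₂,
      Matrix.fromBlocks_apply₂₁, Matrix.fromBlocks_apply₂₂, Matrix.smul_apply,
      Matrix.one_apply, h, if_true, if_false, smul_eq_mul, mul_one, mul_zero, if_neg,
      if_pos, neg_mul]
  · exact h₁.neg.const_mul _
  · simpa using (hasDerivAt_const t (0:ℝ))
  · exact h₂.const_mul _
  · simpa using (hasDerivAt_const t (0:ℝ))
  · exact h₂.const_mul _
  · simpa using (hasDerivAt_const t (0:ℝ))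
  · exact h₃.neg.const_mul _
  · simpa using (hasDerivAt_const t (0:ℝ))

lemma tendsto_div_of_hasDerivAt {f : ℝ → ℝ} {d : ℝ} (h0 : f 0 = 0) (h : HasDerivAt f d 0) :
    Tendsto (fun t => f t / t) (𝓝[>] (0:ℝ)) (𝓝 d) := by
  have h2 := hasDerivAt_iff_tendsto_slope.mp h
  have h3 : Tendsto (slope f 0) (𝓝[>] (0:ℝ)) (𝓝 d) :=
    h2.mono_left (nhdsWithin_mono _ (fun x hx => ne_of_gt hx))
  refine h3.congr fun t => ?_
  simp [slope_def_field, h0]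

lemma tendsto_sinh_div (a : ℝ) :
    Tendsto (fun t => Real.sinh (a * t) / t) (𝓝[>] (0:ℝ)) (𝓝 a) :=
  tendsto_div_of_hasDerivAt (by simp) (by simpa using hasDerivAt_sinh_mul a 0)

lemma tendsto_ss (a b : ℝ) :
    Tendsto (fun t => Real.sinh (a * t) * Real.sinh (b * t) / t ^ 2)
      (𝓝[>] (0:ℝ)) (𝓝 (a * b)) := by
  refine ((tendsto_sinh_div a).mul (tendsto_sinh_div b)).congr fun t => ?_
  rw [div_mul_div_comm, sq]

lemma tendsto_pow_zero (k : ℕ) (hk : 0 < k) :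
    Tendsto (fun t : ℝ => t ^ k) (𝓝[>] (0:ℝ)) (𝓝 0) := by
  have := ((continuous_pow k).tendsto (0:ℝ)).mono_left (nhdsWithin_le_nhds (s := Ioi 0))
  simpa [zero_pow hk.ne'] using this

lemma tendsto_L1 (a b : ℝ) :
    Tendsto (fun t => f1 a b t / t) (𝓝[>] (0:ℝ)) (𝓝 (a * b * (a ^ 2 - b ^ 2) ^ 2)) :=
  tendsto_div_of_hasDerivAt (by simp [f1]) (by simpa [f1'] using hf1 a b 0)

lemma tendsto_L2 (a b : ℝ) :
    Tendsto (fun t => f2 a b t / t ^ 2) (𝓝[>] (0:ℝ))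
      (𝓝 (a * b * (a ^ 2 - b ^ 2) ^ 2 / 2)) := by
  apply HasDerivAt.lhopital_zero_right_on_Ioo (f' := f1 a b) (g' := fun x => 2 * x)
    (a := 0) (b := 1) one_pos
  · exact fun x _ => hf2 a b x
  · exact fun x _ => by simpa using hasDerivAt_pow 2 x
  · exact fun x hx => by have := hx.1; positivity
  · have := (hf2 a b 0).continuousAt.tendsto.mono_left (nhdsWithin_le_nhds (s := Ioi 0))
    simpa [f2] using this
  · simpa using tendsto_pow_zero 2 two_pos
  · refine ((tendsto_L1 a b).div_const 2).congr fun t => ?_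
    rw [div_div, mul_comm]

lemma tendsto_L3 (a b : ℝ) :
    Tendsto (fun t => f0' a b t / t ^ 3) (𝓝[>] (0:ℝ))
      (𝓝 (a * b * (a ^ 2 - b ^ 2) ^ 2 / 3)) := by
  apply HasDerivAt.lhopital_zero_right_on_Ioo (f' := f0'' a b) (g' := fun x => 3 * x ^ 2)
    (a := 0) (b := 1) one_pos
  · exact fun x _ => hf0' a b x
  · exact fun x _ => by simpa using hasDerivAt_pow 3 x
  · exact fun x hx => by have := hx.1; positivity
  · have := (hf0' a b 0).continuousAt.tendsto.mono_left (nhdsWithin_le_nhds (s := Ioi 0))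
    simpa [f0'] using this
  · simpa using tendsto_pow_zero 3 three_pos
  · have h := (tendsto_ss a b).const_mul ((a ^ 2 - b ^ 2) ^ 2 / 3)
    rw [show (a ^ 2 - b ^ 2) ^ 2 / 3 * (a * b) = a * b * (a ^ 2 - b ^ 2) ^ 2 / 3 by ring] at h
    refine h.congr' ?_
    filter_upwards [self_mem_nhdsWithin] with t (ht : 0 < t)
    unfold f0''
    field_simp

lemma tendsto_L4 (a b : ℝ) :
    Tendsto (fun t => f0 a b t / t ^ 4) (𝓝[>] (0:ℝ))
      (𝓝 (a * b * (a ^ 2 - b ^ 2) ^ 2 / 12)) := by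
  apply HasDerivAt.lhopital_zero_right_on_Ioo (f' := f0' a b) (g' := fun x => 4 * x ^ 3)
    (a := 0) (b := 1) one_pos
  · exact fun x _ => hf0 a b x
  · exact fun x _ => by simpa using hasDerivAt_pow 4 x
  · exact fun x hx => by have := hx.1; positivity
  · have := (hf0 a b 0).continuousAt.tendsto.mono_left (nhdsWithin_le_nhds (s := Ioi 0))
    simpa [f0] using this
  · simpa using tendsto_pow_zero 4 (by norm_num)
  · have h := (tendsto_L3 a b).div_const 4
    rw [show a * b * (a ^ 2 - b ^ 2) ^ 2 / 3 / 4 = a * b * (a ^ 2 - b ^ 2) ^ 2 / 12 by ring] at h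
    refine h.congr' ?_
    filter_upwards [self_mem_nhdsWithin] with t (ht : 0 < t)
    rw [div_div, mul_comm]

lemma tendsto_LD (a b : ℝ) :
    Tendsto (fun t => (f1 a b t * f0' a b t - (f2 a b t) ^ 2) / t ^ 4) (𝓝[>] (0:ℝ))
      (𝓝 ((a * b * (a ^ 2 - b ^ 2) ^ 2) ^ 2 / 12)) := by
  have h := ((tendsto_L1 a b).mul (tendsto_L3 a b)).sub ((tendsto_L2 a b).mul (tendsto_L2 a b))
  rw [show a * b * (a ^ 2 - b ^ 2) ^ 2 * (a * b * (a ^ 2 - b ^ 2) ^ 2 / 3)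
      - a * b * (a ^ 2 - b ^ 2) ^ 2 / 2 * (a * b * (a ^ 2 - b ^ 2) ^ 2 / 2)
      = (a * b * (a ^ 2 - b ^ 2) ^ 2) ^ 2 / 12 by ring] at h
  refine h.congr' ?_
  filter_upwards [self_mem_nhdsWithin] with t (ht : 0 < t)
  field_simp

lemma tendsto_ratio {g h : ℝ → ℝ} {m k : ℕ} (hk : 0 < k) {Lg Lh : ℝ} (hLh : Lh ≠ 0)
    (Hg : Tendsto (fun t => g t / t ^ (m + k)) (𝓝[>] (0:ℝ)) (𝓝 Lg))
    (Hh : Tendsto (fun t => h t / t ^ m) (𝓝[>] (0:ℝ)) (𝓝 Lh))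
    (hne : ∀ᶠ t in 𝓝[>] (0:ℝ), h t ≠ 0) :
    Tendsto (fun t => g t / h t) (𝓝[>] (0:ℝ)) (𝓝 0) := by
  have hmain := ((Hg.div Hh hLh).mul (tendsto_pow_zero k hk))
  rw [mul_zero] at hmain
  refine hmain.congr' ?_
  filter_upwards [self_mem_nhdsWithin, hne] with t (ht : 0 < t) hht
  simp only [Pi.div_apply]
  field_simp
  rw [pow_add]
  ring

end RiccatiAux

open Topology

/-- **Explicit solution of the Riccati equation, case `k₂² > 2k₁ > 0`** (Lemma 3.3 (1)):
`S(t) = ½[[-(s₁/s₀)I, (s₂/s₀)I], [(s₂/s₀)I, -(s₀'/s₀)I]]` solves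
`S' = SC + CᵀS + SDS − K` with `K = [[k₁I, 0], [0, k₂I]]` on every interval of `(0, ∞)` where
`s₀` does not vanish, and `S(t)⁻¹ → 0` as `t → 0⁺`. -/
theorem riccati_explicit_case1 (n : ℕ) (hn : 1 ≤ n)
    (k₁ k₂ : ℝ) (hk₁ : 0 < 2 * k₁) (hk₂ : 2 * k₁ < k₂ ^ 2) :
    (∀ a b : ℝ, 0 ≤ a → (∀ r ∈ Ioo a b, s0A k₁ k₂ r ≠ 0) → ∀ t ∈ Ioo a b,
      ∀ i j, HasDerivAt (fun τ => harnackMatrix n (s0A k₁ k₂) (s1A k₁ k₂) (s2A k₁ k₂) τ i j)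
        ((harnackMatrix n (s0A k₁ k₂) (s1A k₁ k₂) (s2A k₁ k₂) t * Cmat n
          + (Cmat n)ᵀ * harnackMatrix n (s0A k₁ k₂) (s1A k₁ k₂) (s2A k₁ k₂) t
          + harnackMatrix n (s0A k₁ k₂) (s1A k₁ k₂) (s2A k₁ k₂) t * Dmat n *
              harnackMatrix n (s0A k₁ k₂) (s1A k₁ k₂) (s2A k₁ k₂) t
          - blockDiag n k₁ k₂) i j) t) ∧
    (∀ i j, Tendsto (fun t => (harnackMatrix n (s0A k₁ k₂) (s1A k₁ k₂) (s2A k₁ k₂) t)⁻¹ i j)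
      (nhdsWithin 0 (Ioi 0)) (nhds 0)) := by
  have hd : (0:ℝ) < k₂ ^ 2 - 2 * k₁ := by linarith
  rcases le_or_gt k₂ 0 with hk2 | hk2
  · -- degenerate case `k₂ < 0` : both `λᵢ` vanish
    have hsle : Real.sqrt (k₂ ^ 2 - 2 * k₁) ≤ -k₂ := by
      have h1 : Real.sqrt (k₂ ^ 2 - 2 * k₁) ≤ Real.sqrt (k₂ ^ 2) :=
        Real.sqrt_le_sqrt (by linarith)
      rwa [Real.sqrt_sq_eq_abs, abs_of_nonpos hk2] at h1
    have h1 : lam1 k₁ k₂ = 0 := by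
      rw [lam1]
      exact Real.sqrt_eq_zero'.mpr (by linarith)
    have h2 : lam2 k₁ k₂ = 0 := by
      rw [lam2]
      have := Real.sqrt_nonneg (k₂ ^ 2 - 2 * k₁)
      exact Real.sqrt_eq_zero'.mpr (by linarith)
    have hs0 : s0A k₁ k₂ = fun _ => 0 := by
      funext t; unfold s0A; rw [h1, h2]; ring
    have hs1 : s1A k₁ k₂ = fun _ => 0 := by
      funext t; unfold s1A; rw [h1, h2]; ring
    have hs2 : s2A k₁ k₂ = fun _ => 0 := by
      funext t; unfold s2A; rw [h1, h2]; ring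
    constructor
    · intro a' b' _ hsne t ht i j
      exact absurd (congrFun hs0 t) (hsne t ht)
    · intro i j
      have hmat0 : ∀ t, harnackMatrix n (s0A k₁ k₂) (s1A k₁ k₂) (s2A k₁ k₂) t = 0 := by
        intro t
        unfold harnackMatrix
        rw [hs0, hs1, hs2]
        ext (x | x) (y | y) <;>
          simp [Matrix.fromBlocks]
      haveI hne : Nonempty (Fin n ⊕ Fin n) := ⟨Sum.inl ⟨0, hn⟩⟩
      have hinv0 : (0 : Matrix (Fin n ⊕ Fin n) (Fin n ⊕ Fin n) ℝ)⁻¹ = 0 := by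
        rw [Matrix.inv_def, Matrix.det_zero, Ring.inverse_zero, zero_smul]
      simp only [hmat0, hinv0, Matrix.zero_apply]
      exact tendsto_const_nhds
  · -- main case `k₂ > 0`
    set a := lam1 k₁ k₂ with ha_def
    set b := lam2 k₁ k₂ with hb_def
    have hsd_nonneg := Real.sqrt_nonneg (k₂ ^ 2 - 2 * k₁)
    have hsd_pos : 0 < Real.sqrt (k₂ ^ 2 - 2 * k₁) := Real.sqrt_pos.mpr hd
    have hsd_lt : Real.sqrt (k₂ ^ 2 - 2 * k₁) < k₂ := (Real.sqrt_lt' hk2).mpr (by linarith)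
    have ha2 : a ^ 2 = k₂ + Real.sqrt (k₂ ^ 2 - 2 * k₁) := Real.sq_sqrt (by linarith)
    have hb2 : b ^ 2 = k₂ - Real.sqrt (k₂ ^ 2 - 2 * k₁) := Real.sq_sqrt (by linarith)
    have ha_pos : 0 < a := Real.sqrt_pos.mpr (by linarith)
    have hb_pos : 0 < b := Real.sqrt_pos.mpr (by linarith)
    have hba : b ^ 2 < a ^ 2 := by rw [ha2, hb2]; linarith
    have hsum : a ^ 2 + b ^ 2 = 2 * k₂ := by rw [ha2, hb2]; ring
    have hprod : a ^ 2 * b ^ 2 = 2 * k₁ := by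
      have hs2 : (Real.sqrt (k₂ ^ 2 - 2 * k₁)) ^ 2 = k₂ ^ 2 - 2 * k₁ := Real.sq_sqrt hd.le
      rw [ha2, hb2]
      linear_combination -hs2
    have e0 : s0A k₁ k₂ = RiccatiAux.f0 a b := rfl
    have e1 : s1A k₁ k₂ = RiccatiAux.f1 a b := rfl
    have e2 : s2A k₁ k₂ = RiccatiAux.f2 a b := rfl
    have ederiv : deriv (RiccatiAux.f0 a b) = RiccatiAux.f0' a b :=
      funext fun τ => (RiccatiAux.hf0 a b τ).deriv
    rw [e0, e1, e2]
    constructor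
    · -- the Riccati equation
      intro a' b' _ hsne t ht i j
      have hs0t : RiccatiAux.f0 a b t ≠ 0 := hsne t ht
      have HP : HasDerivAt (fun τ => RiccatiAux.f1 a b τ / RiccatiAux.f0 a b τ)
          (2 * k₁ - (RiccatiAux.f2 a b t / RiccatiAux.f0 a b t) ^ 2) t := by
        have h := (RiccatiAux.hf1 a b t).div (RiccatiAux.hf0 a b t) hs0t
        refine h.congr_deriv ?_
        rw [RiccatiAux.I1, ← hprod]
        field_simp
      have HQ : HasDerivAt (fun τ => RiccatiAux.f2 a b τ / RiccatiAux.f0 a b τ)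
          (RiccatiAux.f1 a b t / RiccatiAux.f0 a b t
            - RiccatiAux.f2 a b t / RiccatiAux.f0 a b t
              * (RiccatiAux.f0' a b t / RiccatiAux.f0 a b t)) t := by
        have h := (RiccatiAux.hf2 a b t).div (RiccatiAux.hf0 a b t) hs0t
        refine h.congr_deriv ?_
        field_simp
      have HR : HasDerivAt (fun τ => RiccatiAux.f0' a b τ / RiccatiAux.f0 a b τ)
          (2 * (RiccatiAux.f2 a b t / RiccatiAux.f0 a b t)
            - (RiccatiAux.f0' a b t / RiccatiAux.f0 a b t) ^ 2 + 2 * k₂) t := by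
        have h := (RiccatiAux.hf0' a b t).div (RiccatiAux.hf0 a b t) hs0t
        refine h.congr_deriv ?_
        rw [RiccatiAux.I3, ← hsum]
        field_simp
        ring
      have hfun : (fun τ => harnackMatrix n (RiccatiAux.f0 a b) (RiccatiAux.f1 a b)
            (RiccatiAux.f2 a b) τ i j)
          = fun τ => RiccatiAux.sb n (RiccatiAux.f1 a b τ / RiccatiAux.f0 a b τ)
              (RiccatiAux.f2 a b τ / RiccatiAux.f0 a b τ)
              (deriv (RiccatiAux.f0 a b) τ / RiccatiAux.f0 a b τ) i j := rfl
      have hH : harnackMatrix n (RiccatiAux.f0 a b) (RiccatiAux.f1 a b) (RiccatiAux.f2 a b) t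
          = RiccatiAux.sb n (RiccatiAux.f1 a b t / RiccatiAux.f0 a b t)
              (RiccatiAux.f2 a b t / RiccatiAux.f0 a b t)
              (deriv (RiccatiAux.f0 a b) t / RiccatiAux.f0 a b t) := rfl
      rw [hfun, hH, ederiv, RiccatiAux.riccati_matrix]
      exact RiccatiAux.entry_deriv n _ _ _ _ _ _ t HP HQ HR i j
    · -- the inverse tends to 0
      intro i j
      set c := a * b * (a ^ 2 - b ^ 2) ^ 2 with hc_def
      have hc : 0 < c := by
        have h1 : 0 < a ^ 2 - b ^ 2 := by linarith
        have := mul_pos (mul_pos ha_pos hb_pos) (pow_pos h1 2)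
        simpa [hc_def, mul_assoc] using this
      have hne0 : ∀ᶠ t in 𝓝[>] (0:ℝ), RiccatiAux.f0 a b t ≠ 0 := by
        have h := (RiccatiAux.tendsto_L4 a b).eventually_ne
          (show c / 12 ≠ 0 from ne_of_gt (by positivity))
        filter_upwards [h] with t h4 h0
        exact h4 (by rw [h0, zero_div])
      have hneD : ∀ᶠ t in 𝓝[>] (0:ℝ),
          RiccatiAux.f1 a b t * RiccatiAux.f0' a b t - RiccatiAux.f2 a b t ^ 2 ≠ 0 := by
        have h := (RiccatiAux.tendsto_LD a b).eventually_ne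
          (show c ^ 2 / 12 ≠ 0 from ne_of_gt (by positivity))
        filter_upwards [h] with t h4 h0
        exact h4 (by rw [h0, zero_div])
      have hinv : ∀ᶠ t in 𝓝[>] (0:ℝ),
          (harnackMatrix n (RiccatiAux.f0 a b) (RiccatiAux.f1 a b) (RiccatiAux.f2 a b) t)⁻¹
            = Matrix.fromBlocks
              ((-2 * RiccatiAux.f0 a b t * RiccatiAux.f0' a b t
                / (RiccatiAux.f1 a b t * RiccatiAux.f0' a b t - RiccatiAux.f2 a b t ^ 2)) • 1)
              ((-2 * RiccatiAux.f2 a b t * RiccatiAux.f0 a b t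
                / (RiccatiAux.f1 a b t * RiccatiAux.f0' a b t - RiccatiAux.f2 a b t ^ 2)) • 1)
              ((-2 * RiccatiAux.f2 a b t * RiccatiAux.f0 a b t
                / (RiccatiAux.f1 a b t * RiccatiAux.f0' a b t - RiccatiAux.f2 a b t ^ 2)) • 1)
              ((-2 * RiccatiAux.f1 a b t * RiccatiAux.f0 a b t
                / (RiccatiAux.f1 a b t * RiccatiAux.f0' a b t - RiccatiAux.f2 a b t ^ 2)) • 1) := by
        filter_upwards [hne0, hneD] with t h0 hD
        have hH : harnackMatrix n (RiccatiAux.f0 a b) (RiccatiAux.f1 a b) (RiccatiAux.f2 a b) t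
            = RiccatiAux.sb n (RiccatiAux.f1 a b t / RiccatiAux.f0 a b t)
                (RiccatiAux.f2 a b t / RiccatiAux.f0 a b t)
                (deriv (RiccatiAux.f0 a b) t / RiccatiAux.f0 a b t) := rfl
        rw [hH, ederiv]
        apply Matrix.inv_eq_right_inv
        apply RiccatiAux.sb_mul_T <;>
          · field_simp
            ring
      have hmain : Tendsto (fun t => (Matrix.fromBlocks
              ((-2 * RiccatiAux.f0 a b t * RiccatiAux.f0' a b t
                / (RiccatiAux.f1 a b t * RiccatiAux.f0' a b t - RiccatiAux.f2 a b t ^ 2)) • 1)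
              ((-2 * RiccatiAux.f2 a b t * RiccatiAux.f0 a b t
                / (RiccatiAux.f1 a b t * RiccatiAux.f0' a b t - RiccatiAux.f2 a b t ^ 2)) • 1)
              ((-2 * RiccatiAux.f2 a b t * RiccatiAux.f0 a b t
                / (RiccatiAux.f1 a b t * RiccatiAux.f0' a b t - RiccatiAux.f2 a b t ^ 2)) • 1)
              ((-2 * RiccatiAux.f1 a b t * RiccatiAux.f0 a b t
                / (RiccatiAux.f1 a b t * RiccatiAux.f0' a b t - RiccatiAux.f2 a b t ^ 2)) • 1)
            : Matrix (Fin n ⊕ Fin n) (Fin n ⊕ Fin n) ℝ) i j) (𝓝[>] (0:ℝ)) (𝓝 0) := by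
        have hu : Tendsto (fun t => -2 * RiccatiAux.f0 a b t * RiccatiAux.f0' a b t
            / (RiccatiAux.f1 a b t * RiccatiAux.f0' a b t - RiccatiAux.f2 a b t ^ 2))
            (𝓝[>] (0:ℝ)) (𝓝 0) := by
          have h := ((RiccatiAux.tendsto_L4 a b).mul (RiccatiAux.tendsto_L3 a b)).const_mul
            (-2 : ℝ)
          have hg : Tendsto (fun t => (-2 * RiccatiAux.f0 a b t * RiccatiAux.f0' a b t)
              / t ^ (4 + 3)) (𝓝[>] (0:ℝ))
              (𝓝 (-2 * (a * b * (a ^ 2 - b ^ 2) ^ 2 / 12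
                * (a * b * (a ^ 2 - b ^ 2) ^ 2 / 3)))) := by
            refine h.congr' ?_
            filter_upwards [self_mem_nhdsWithin] with t (ht : 0 < t)
            field_simp
            ring
          exact RiccatiAux.tendsto_ratio (by norm_num)
            (show c ^ 2 / 12 ≠ 0 from ne_of_gt (by positivity)) hg
            (RiccatiAux.tendsto_LD a b) hneD
        have hv : Tendsto (fun t => -2 * RiccatiAux.f2 a b t * RiccatiAux.f0 a b t
            / (RiccatiAux.f1 a b t * RiccatiAux.f0' a b t - RiccatiAux.f2 a b t ^ 2))
            (𝓝[>] (0:ℝ)) (𝓝 0) := by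
          have h := ((RiccatiAux.tendsto_L2 a b).mul (RiccatiAux.tendsto_L4 a b)).const_mul
            (-2 : ℝ)
          have hg : Tendsto (fun t => (-2 * RiccatiAux.f2 a b t * RiccatiAux.f0 a b t)
              / t ^ (4 + 2)) (𝓝[>] (0:ℝ))
              (𝓝 (-2 * (a * b * (a ^ 2 - b ^ 2) ^ 2 / 2
                * (a * b * (a ^ 2 - b ^ 2) ^ 2 / 12)))) := by
            refine h.congr' ?_
            filter_upwards [self_mem_nhdsWithin] with t (ht : 0 < t)
            field_simp
            ring
          exact RiccatiAux.tendsto_ratio (by norm_num)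
            (show c ^ 2 / 12 ≠ 0 from ne_of_gt (by positivity)) hg
            (RiccatiAux.tendsto_LD a b) hneD
        have hw : Tendsto (fun t => -2 * RiccatiAux.f1 a b t * RiccatiAux.f0 a b t
            / (RiccatiAux.f1 a b t * RiccatiAux.f0' a b t - RiccatiAux.f2 a b t ^ 2))
            (𝓝[>] (0:ℝ)) (𝓝 0) := by
          have h := ((RiccatiAux.tendsto_L1 a b).mul (RiccatiAux.tendsto_L4 a b)).const_mul
            (-2 : ℝ)
          have hg : Tendsto (fun t => (-2 * RiccatiAux.f1 a b t * RiccatiAux.f0 a b t)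
              / t ^ (4 + 1)) (𝓝[>] (0:ℝ))
              (𝓝 (-2 * (a * b * (a ^ 2 - b ^ 2) ^ 2
                * (a * b * (a ^ 2 - b ^ 2) ^ 2 / 12)))) := by
            refine h.congr' ?_
            filter_upwards [self_mem_nhdsWithin] with t (ht : 0 < t)
            field_simp
            ring
          exact RiccatiAux.tendsto_ratio (by norm_num)
            (show c ^ 2 / 12 ≠ 0 from ne_of_gt (by positivity)) hg
            (RiccatiAux.tendsto_LD a b) hneD
        rcases i with i | i <;> rcases j with j | j <;>
          by_cases hij : i = j <;>
          simp only [Matrix.fromBlocks_apply₁₁, Matrix.fromBlocks_apply₁₂,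
            Matrix.fromBlocks_apply₂₁, Matrix.fromBlocks_apply₂₂, Matrix.smul_apply,
            Matrix.one_apply, hij, if_true, if_false, smul_eq_mul, mul_one, mul_zero,
            if_neg, if_pos] <;>
          first
            | exact tendsto_const_nhds
            | assumption
      refine hmain.congr' ?_
      filter_upwards [hinv] with t h
      rw [h]
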